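/- Let μ and ν be positive Borel measures on ℝ with all polynomial moments finite, let r be a real polynomial of degree 1 with ∫ f dμ = ∫ f·r dν for every real polynomial f, and let (P_n), (p_n) be real polynomials with deg P_n = deg p_n = n, ∫ P_n P_m dμ = H_n δ_{n,m}, ∫ p_n p_m dν = h_n δ_{n,m}, H_n, h_n > 0. Let L be a linear map on the space of real polynomials with L P_n = Λ_n P_n for a sequence Λ : ℕ → ℝ, and set Λ_{−1} := 0. Then for all n, m ∈ ℕ: (1/√(h_n h_m)) ∫ r·(L p_n)·p_m dν = a_n δ_{m,n+1} + b_n δ_{m,n} + a_{n−1} δ_{m,n−1}, where a_n = Λ_n·lc(r)·(lc(p_n)/lc(p_{n+1}))·√(h_{n+1}/h_n), b_n = Λ_n·(H_n/h_n)·(lc(p_n)/lc(P_n))² + Λ_{n−1}·lc(r)²·(h_n/H_{n−1})·(lc(P_{n−1})/lc(p_n))², and a_{−1} := 0. -/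

import Mathlib

open MeasureTheory Polynomial Finset

private lemma aux_repr (Q : ℕ → Polynomial ℝ) (hQ : ∀ n, (Q n).degree = n) :
    ∀ N (q : Polynomial ℝ), q.natDegree ≤ N →
      ∃ c : ℕ → ℝ, q = ∑ k ∈ Finset.range (N + 1), c k • Q k := by
  have hnd : ∀ n, (Q n).natDegree = n := fun n => natDegree_eq_of_degree_eq_some (hQ n)
  have hne : ∀ n, Q n ≠ 0 := by
    intro n h0
    have := hQ n; rw [h0, degree_zero] at this; exact absurd this (by simp)
  have hlc : ∀ n, (Q n).leadingCoeff ≠ 0 := fun n => leadingCoeff_ne_zero.mpr (hne n)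
  intro N
  induction N with
  | zero =>
    intro q hq
    refine ⟨fun _ => q.coeff 0 / (Q 0).leadingCoeff, ?_⟩
    have hq0 : Q 0 = Polynomial.C ((Q 0).coeff 0) :=
      eq_C_of_natDegree_le_zero (le_of_eq (hnd 0))
    have hqq : q = Polynomial.C (q.coeff 0) := eq_C_of_natDegree_le_zero hq
    have hl : (Q 0).leadingCoeff = (Q 0).coeff 0 := by
      rw [leadingCoeff, hnd 0]
    have hl0 : (Q 0).coeff 0 ≠ 0 := hl ▸ hlc 0
    rw [Finset.sum_range_one, hl]
    nth_rewrite 1 [hqq]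
    nth_rewrite 2 [hq0]
    rw [Polynomial.smul_C]
    congr 1
    field_simp
    rw [smul_eq_mul, div_mul_cancel₀ _ hl0]
  | succ N ih =>
    intro q hq
    set d := q.coeff (N + 1) / (Q (N + 1)).leadingCoeff with hd
    have hsub : (q - d • Q (N + 1)).natDegree ≤ N := by
      rw [natDegree_le_iff_coeff_eq_zero]
      intro m hm
      rw [Polynomial.coeff_sub, Polynomial.coeff_smul, smul_eq_mul]
      rcases eq_or_lt_of_le (Nat.succ_le_of_lt hm) with hm1 | hm1
      · rw [← hm1]
        have hQc : (Q (N + 1)).coeff (N + 1) = (Q (N + 1)).leadingCoeff := by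
          rw [leadingCoeff, hnd]
        rw [hQc, hd, div_mul_cancel₀ _ (hlc (N + 1))]
        ring
      · rw [coeff_eq_zero_of_natDegree_lt (lt_of_le_of_lt hq hm1),
          coeff_eq_zero_of_natDegree_lt (by rw [hnd]; exact hm1)]
        ring
    obtain ⟨c, hc⟩ := ih _ hsub
    refine ⟨fun k => if k = N + 1 then d else c k, ?_⟩
    rw [Finset.sum_range_succ]
    have hrw : ∑ k ∈ Finset.range (N + 1), (if k = N + 1 then d else c k) • Q k
        = ∑ k ∈ Finset.range (N + 1), c k • Q k := by
      refine Finset.sum_congr rfl fun k hk => ?_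
      rw [if_neg (by simp at hk; omega)]
    show q = (∑ k ∈ Finset.range (N + 1), (if k = N + 1 then d else c k) • Q k)
      + (if N + 1 = N + 1 then d else c (N + 1)) • Q (N + 1)
    rw [if_pos rfl, hrw, ← hc]
    ring

private lemma aux_int_sum' (m0 : Measure ℝ)
    (hint : ∀ f : Polynomial ℝ, Integrable (fun x => f.eval x) m0)
    (Q : ℕ → Polynomial ℝ) (g : Polynomial ℝ) (c : ℕ → ℝ) (N : ℕ) :
    ∫ x, (∑ k ∈ Finset.range (N + 1), c k • Q k).eval x * g.eval x ∂m0
      = ∑ k ∈ Finset.range (N + 1), c k * ∫ x, (Q k).eval x * g.eval x ∂m0 := by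
  have h1 : (fun x => (∑ k ∈ Finset.range (N + 1), c k • Q k).eval x * g.eval x)
      = fun x => ∑ k ∈ Finset.range (N + 1), c k * (Q k * g).eval x := by
    funext x
    rw [Polynomial.eval_finset_sum, Finset.sum_mul]
    refine Finset.sum_congr rfl fun k _ => ?_
    simp [mul_assoc]
  rw [h1, integral_finset_sum _ fun k _ => (hint (Q k * g)).const_mul _]
  refine Finset.sum_congr rfl fun k _ => ?_
  rw [MeasureTheory.integral_const_mul]
  simp_rw [Polynomial.eval_mul]

private lemma aux_int_sum (m0 : Measure ℝ)
    (hint : ∀ f : Polynomial ℝ, Integrable (fun x => f.eval x) m0)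
    (Q : ℕ → Polynomial ℝ) (K : ℕ → ℝ)
    (horth : ∀ n m, ∫ x, (Q n).eval x * (Q m).eval x ∂m0 = if n = m then K n else 0)
    (c : ℕ → ℝ) (N j : ℕ) (hj : j ≤ N) :
    ∫ x, (∑ k ∈ Finset.range (N + 1), c k • Q k).eval x * (Q j).eval x ∂m0 = c j * K j := by
  rw [aux_int_sum' m0 hint Q (Q j) c N]
  rw [Finset.sum_eq_single_of_mem j (Finset.mem_range.mpr (by omega))]
  · rw [horth, if_pos rfl]
  · intro k _ hk
    rw [horth, if_neg hk, mul_zero]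

private lemma aux_key (m0 : Measure ℝ)
    (hint : ∀ f : Polynomial ℝ, Integrable (fun x => f.eval x) m0)
    (Q : ℕ → Polynomial ℝ) (hQ : ∀ n, (Q n).degree = n) (K : ℕ → ℝ)
    (horth : ∀ n m, ∫ x, (Q n).eval x * (Q m).eval x ∂m0 = if n = m then K n else 0)
    (q : Polynomial ℝ) (j : ℕ) (hdeg : q.natDegree ≤ j) :
    ∫ x, q.eval x * (Q j).eval x ∂m0 = q.coeff j / (Q j).leadingCoeff * K j := by
  have hnd : ∀ n, (Q n).natDegree = n := fun n => natDegree_eq_of_degree_eq_some (hQ n)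
  have hne : Q j ≠ 0 := by
    intro h0
    have := hQ j; rw [h0, degree_zero] at this; exact absurd this (by simp)
  have hlc : (Q j).leadingCoeff ≠ 0 := leadingCoeff_ne_zero.mpr hne
  obtain ⟨c, hc⟩ := aux_repr Q hQ j q hdeg
  have hcj : q.coeff j = c j * (Q j).leadingCoeff := by
    rw [hc, Polynomial.finset_sum_coeff]
    rw [Finset.sum_eq_single_of_mem j (Finset.mem_range.mpr (by omega))]
    · rw [Polynomial.coeff_smul, smul_eq_mul, leadingCoeff, hnd]
    · intro k hk hkj
      rw [Polynomial.coeff_smul, smul_eq_mul,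
        coeff_eq_zero_of_natDegree_lt (by rw [hnd]; simp at hk; omega), mul_zero]
  have hI : ∫ x, q.eval x * (Q j).eval x ∂m0 = c j * K j := by
    conv_lhs => rw [hc]
    exact aux_int_sum m0 hint Q K horth c j j le_rfl
  rw [hI, hcj, mul_div_cancel_right₀ _ hlc]

private lemma sqrt_alg {x y : ℝ} (hx : 0 < x) (hy : 0 < y) :
    1 / Real.sqrt (x * y) * x = Real.sqrt (x / y) := by
  have h1 : Real.sqrt x ≠ 0 := ne_of_gt (Real.sqrt_pos.mpr hx)
  have h2 : Real.sqrt y ≠ 0 := ne_of_gt (Real.sqrt_pos.mpr hy)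
  rw [Real.sqrt_mul hx.le, Real.sqrt_div hx.le]
  field_simp
  linear_combination (-1) * Real.mul_self_sqrt hx.le

private lemma alg_b {P1 r hm L1 Pm pm H1 Lm Hm am am1 : ℝ} (h1 : hm ≠ 0) (h2 : H1 ≠ 0)
    (h3 : Pm ≠ 0) (h4 : pm ≠ 0) :
    1 / hm * (P1 * r / pm * hm / H1 * L1 * (P1 * r / pm * hm) + pm / Pm * Lm * (pm / Pm * Hm))
      = am * 0 + (Lm * (Hm / hm) * (pm / Pm) ^ 2 + L1 * r ^ 2 * (hm / H1) * (P1 / pm) ^ 2) * 1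
        + am1 * 0 := by
  field_simp
  ring

set_option maxHeartbeats 1000000 in
/-- General tridiagonalisation of the operator `T = r·L` in the orthonormal basis
`p_n/√(h_n)` of `L²(ν)`: the operator acts as a Jacobi (tridiagonal) matrix with
explicit entries in terms of leading coefficients, norms, and the eigenvalues `Λ_n`. -/
theorem stmt_2 (μ ν : Measure ℝ) (r : Polynomial ℝ) (hr : r.degree = 1)
    (hμmom : ∀ f : Polynomial ℝ, Integrable (fun x => f.eval x) μ)
    (hνmom : ∀ f : Polynomial ℝ, Integrable (fun x => f.eval x) ν)
    (hrν : ∀ f : Polynomial ℝ, ∫ x, f.eval x ∂μ = ∫ x, f.eval x * r.eval x ∂ν)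
    (P p : ℕ → Polynomial ℝ) (H h : ℕ → ℝ)
    (hPdeg : ∀ n, (P n).degree = n) (hpdeg : ∀ n, (p n).degree = n)
    (hHpos : ∀ n, 0 < H n) (hhpos : ∀ n, 0 < h n)
    (hPortho : ∀ n m, ∫ x, (P n).eval x * (P m).eval x ∂μ = if n = m then H n else 0)
    (hportho : ∀ n m, ∫ x, (p n).eval x * (p m).eval x ∂ν = if n = m then h n else 0)
    (L : Polynomial ℝ →ₗ[ℝ] Polynomial ℝ) (Λ : ℕ → ℝ)
    (hL : ∀ n, L (P n) = Λ n • P n)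
    (a b : ℕ → ℝ)
    (ha : ∀ n, a n = Λ n * r.leadingCoeff * ((p n).leadingCoeff / (p (n + 1)).leadingCoeff)
        * Real.sqrt (h (n + 1) / h n))
    (hb : ∀ n, b n = Λ n * (H n / h n) * ((p n).leadingCoeff / (P n).leadingCoeff) ^ 2
        + (if n = 0 then 0 else Λ (n - 1)) * r.leadingCoeff ^ 2 * (h n / H (n - 1))
            * ((P (n - 1)).leadingCoeff / (p n).leadingCoeff) ^ 2) :
    ∀ n m : ℕ,
      (1 / Real.sqrt (h n * h m)) * ∫ x, r.eval x * (L (p n)).eval x * (p m).eval x ∂ν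
        = a n * (if m = n + 1 then 1 else 0) + b n * (if m = n then 1 else 0)
          + (if n = 0 then 0 else a (n - 1) * (if m = n - 1 then 1 else 0)) := by
  have hndP : ∀ k, (P k).natDegree = k := fun k => natDegree_eq_of_degree_eq_some (hPdeg k)
  have hndp : ∀ k, (p k).natDegree = k := fun k => natDegree_eq_of_degree_eq_some (hpdeg k)
  have hndr : r.natDegree = 1 := natDegree_eq_of_degree_eq_some hr
  have hPne : ∀ k, P k ≠ 0 := by
    intro k h0
    have := hPdeg k; rw [h0, degree_zero] at this; exact absurd this (by simp)
  have hpne : ∀ k, p k ≠ 0 := by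
    intro k h0
    have := hpdeg k; rw [h0, degree_zero] at this; exact absurd this (by simp)
  have hlcP : ∀ k, (P k).leadingCoeff ≠ 0 := fun k => leadingCoeff_ne_zero.mpr (hPne k)
  have hlcp : ∀ k, (p k).leadingCoeff ≠ 0 := fun k => leadingCoeff_ne_zero.mpr (hpne k)
  have hHne : ∀ k, H k ≠ 0 := fun k => ne_of_gt (hHpos k)
  have hhne : ∀ k, h k ≠ 0 := fun k => ne_of_gt (hhpos k)
  -- the cross integrals
  have hA : ∀ k j, ∫ x, (P k).eval x * (p j).eval x ∂μ =
      if j = k then (p k).leadingCoeff / (P k).leadingCoeff * H k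
      else if j = k + 1 then
        (P k).leadingCoeff * r.leadingCoeff / (p (k + 1)).leadingCoeff * h (k + 1)
      else 0 := by
    intro k j
    rcases le_or_gt j k with hjk | hjk
    · have hco : (fun x => (P k).eval x * (p j).eval x)
          = fun x => (p j).eval x * (P k).eval x := by funext x; ring
      have hkey := aux_key μ hμmom P hPdeg H hPortho (p j) k (by rw [hndp]; exact hjk)
      rw [show (∫ x, (P k).eval x * (p j).eval x ∂μ)
          = ∫ x, (p j).eval x * (P k).eval x ∂μ from by rw [hco], hkey]
      rcases eq_or_lt_of_le hjk with he | hl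
      · rw [if_pos he, he]
        have hcc : (p k).coeff k = (p k).leadingCoeff := by rw [leadingCoeff, hndp]
        rw [hcc]
      · rw [if_neg (by omega), if_neg (by omega),
          coeff_eq_zero_of_natDegree_lt (by rw [hndp]; exact hl), zero_div, zero_mul]
    · have hdeg : (P k * r).natDegree ≤ k + 1 :=
        le_trans natDegree_mul_le (by rw [hndP, hndr])
      have h1 := hrν (P k * p j)
      simp only [Polynomial.eval_mul] at h1
      have hco : (fun x => (P k).eval x * (p j).eval x * r.eval x)
          = fun x => (P k * r).eval x * (p j).eval x := by
        funext x; simp only [Polynomial.eval_mul]; ring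
      rw [h1, hco, aux_key ν hνmom p hpdeg h hportho (P k * r) j
        (le_trans hdeg hjk)]
      rcases eq_or_lt_of_le (Nat.succ_le_of_lt hjk) with he | hl
      · rw [← he, if_neg (by omega), if_pos rfl]
        have hcf : (P k * r).coeff (k + 1) = (P k).leadingCoeff * r.leadingCoeff := by
          have hcmd := Polynomial.coeff_mul_degree_add_degree (P k) r
          rwa [hndP, hndr] at hcmd
        rw [hcf]
      · rw [if_neg (by omega), if_neg (by omega),
          coeff_eq_zero_of_natDegree_lt (lt_of_le_of_lt hdeg hl), zero_div, zero_mul]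
  intro n m
  -- expansion of p n in the P basis
  obtain ⟨c, hc⟩ := aux_repr P hPdeg n (p n) (le_of_eq (hndp n))
  have hcval : ∀ k, k ≤ n → c k * H k = ∫ x, (P k).eval x * (p n).eval x ∂μ := by
    intro k hk
    have h1 : ∫ x, (p n).eval x * (P k).eval x ∂μ = c k * H k := by
      conv_lhs => rw [hc]
      exact aux_int_sum μ hμmom P H hPortho c n k hk
    rw [← h1]
    congr 1
    funext x
    ring
  have hcn : c n = (p n).leadingCoeff / (P n).leadingCoeff := by
    have h1 := hcval n le_rfl
    rw [hA n n, if_pos rfl] at h1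
    exact mul_right_cancel₀ (hHne n) h1
  have hcn1 : n ≠ 0 → c (n - 1)
      = (P (n - 1)).leadingCoeff * r.leadingCoeff / (p n).leadingCoeff * h n / H (n - 1) := by
    intro hn0
    have hn1 : n - 1 + 1 = n := by omega
    have h1 := hcval (n - 1) (by omega)
    rw [hA (n - 1) n, if_neg (by omega), if_pos (by omega), hn1] at h1
    apply mul_right_cancel₀ (hHne (n - 1))
    rw [div_mul_cancel₀ _ (hHne (n - 1))]
    exact h1
  have hc0 : ∀ k, k ≤ n → n ≠ k → n ≠ k + 1 → c k = 0 := by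
    intro k hk h1 h2
    have h3 := hcval k hk
    rw [hA k n, if_neg h1, if_neg h2] at h3
    exact (mul_eq_zero.mp h3).resolve_right (hHne k)
  -- reduce the ν-integral to a sum of μ-integrals
  have hLp : L (p n) = ∑ k ∈ Finset.range (n + 1), (c k * Λ k) • P k := by
    rw [hc, map_sum]
    refine Finset.sum_congr rfl fun k _ => ?_
    rw [LinearMap.map_smul, hL, smul_smul]
  have hmain : ∫ x, r.eval x * (L (p n)).eval x * (p m).eval x ∂ν
      = ∑ k ∈ Finset.range (n + 1),
          c k * Λ k * ∫ x, (P k).eval x * (p m).eval x ∂μ := by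
    have h1 := hrν (L (p n) * p m)
    simp only [Polynomial.eval_mul] at h1
    have h2 : (fun x => r.eval x * (L (p n)).eval x * (p m).eval x)
        = fun x => (L (p n)).eval x * (p m).eval x * r.eval x := by funext x; ring
    rw [show (∫ x, r.eval x * (L (p n)).eval x * (p m).eval x ∂ν)
        = ∫ x, (L (p n)).eval x * (p m).eval x * r.eval x ∂ν from by rw [h2], ← h1]
    conv_lhs => rw [hLp]
    exact aux_int_sum' μ hμmom P (p m) (fun k => c k * Λ k) n
  rw [hmain]
  by_cases hm1 : m = n + 1
  · subst hm1
    rw [Finset.sum_eq_single_of_mem n (Finset.mem_range.mpr (by omega))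
        (by
          intro k hk hkn
          rw [hA k (n + 1), if_neg (by simp only [Finset.mem_range] at hk; omega),
            if_neg (by omega), mul_zero])]
    rw [hA n (n + 1), if_neg (by omega), if_pos rfl, hcn, ha n]
    have hz : (if n = 0 then (0:ℝ)
        else a (n - 1) * (if n + 1 = n - 1 then 1 else 0)) = 0 := by
      split_ifs with h1 h2
      · rfl
      · omega
      · rw [mul_zero]
    rw [hz, if_pos rfl, if_neg (by omega), mul_one, mul_zero, add_zero, add_zero]
    rw [show h n * h (n + 1) = h (n + 1) * h n from mul_comm _ _,
      ← sqrt_alg (hhpos (n + 1)) (hhpos n)]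
    have hsne : Real.sqrt (h (n + 1) * h n) ≠ 0 :=
      ne_of_gt (Real.sqrt_pos.mpr (mul_pos (hhpos _) (hhpos _)))
    field_simp [hlcP n, hlcp (n + 1), hsne]
  · by_cases hm2 : m = n
    · subst hm2
      by_cases hn0 : m = 0
      · subst hn0
        rw [Finset.sum_range_one, hA 0 0, if_pos rfl, hcn, hb 0]
        rw [show (if (0:ℕ) = 0 + 1 then (1:ℝ) else 0) = 0 from if_neg (by omega),
          show (if (0:ℕ) = 0 then (1:ℝ) else 0) = 1 from if_pos rfl,
          show (if (0:ℕ) = 0 then (0:ℝ) else Λ (0 - 1)) = 0 from if_pos rfl]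
        rw [Real.sqrt_mul_self (hhpos 0).le,
          if_pos (rfl : (0:ℕ) = 0)]
        field_simp [hhne 0, hHne 0, hlcP 0, hlcp 0]
        ring
      · have hn1 : m - 1 + 1 = m := by omega
        rw [Finset.sum_range_succ]
        rw [Finset.sum_eq_single_of_mem (m - 1) (Finset.mem_range.mpr (by omega))
            (by
              intro k hk hkn
              rw [hA k m, if_neg (by simp only [Finset.mem_range] at hk; omega),
                if_neg (by simp only [Finset.mem_range] at hk; omega), mul_zero])]
        rw [hA (m - 1) m, if_neg (by omega), if_pos (by omega), hn1,
          hA m m, if_pos rfl, hcn, hcn1 hn0, hb m, if_neg hn0]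
        rw [Real.sqrt_mul_self (hhpos m).le]
        rw [if_neg hm1, if_pos rfl, if_neg hn0, if_neg (by omega)]
        exact alg_b (hhne m) (hHne (m - 1)) (hlcP m) (hlcp m)
    · by_cases hm3 : n ≠ 0 ∧ m = n - 1
      · obtain ⟨hn0, hm3⟩ := hm3
        subst hm3
        have hn1 : n - 1 + 1 = n := by omega
        rw [Finset.sum_eq_single_of_mem (n - 1) (Finset.mem_range.mpr (by omega))
            (by
              intro k hk hkn
              by_cases hkn' : n = k
              · rw [hA k (n - 1), if_neg (by omega), if_neg (by omega), mul_zero]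
              · by_cases hkn'' : n = k + 1
                · omega
                · rw [hc0 k (by simp only [Finset.mem_range] at hk; omega) hkn' hkn'',
                    zero_mul, zero_mul])]
        rw [hA (n - 1) (n - 1), if_pos rfl, hcn1 hn0]
        rw [if_neg (by omega), if_neg (by omega), if_neg hn0, if_pos rfl,
          ha (n - 1), hn1]
        rw [← sqrt_alg (hhpos n) (hhpos (n - 1))]
        have hsne : Real.sqrt (h n * h (n - 1)) ≠ 0 :=
          ne_of_gt (Real.sqrt_pos.mpr (mul_pos (hhpos _) (hhpos _)))
        field_simp [hhne n, hHne (n - 1), hlcP (n - 1), hlcp n, hsne]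
        ring
      · have hsum : (∑ k ∈ Finset.range (n + 1),
            c k * Λ k * ∫ x, (P k).eval x * (p m).eval x ∂μ) = 0 := by
          refine Finset.sum_eq_zero fun k hk => ?_
          simp only [Finset.mem_range] at hk
          by_cases hk1 : n = k
          · rw [hA k m, if_neg (by omega), if_neg (by omega), mul_zero]
          · by_cases hk2 : n = k + 1
            · rw [hA k m, if_neg (by omega), if_neg (by omega), mul_zero]
            · rw [hc0 k (by omega) hk1 hk2, zero_mul, zero_mul]
        rw [hsum, mul_zero, if_neg hm1, if_neg hm2, mul_zero, mul_zero, zero_add,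
          zero_add]
        split_ifs with h1 h2
        · rfl
        · exact absurd ⟨h1, h2⟩ hm3
        · rw [mul_zero]
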